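/- Let α, β be 0-1 vectors of length p with x_i = i − α_i, y_i = i − β_i, and suppose x, y are consistent. Then α^R = β if and only if the unique realization of (x,y) is the perfect mirror PM_{ᾱ}, where ᾱ is the complement of α. -/

import Mathlib

open Finset

lemma all_one {s : Finset ℕ} {f : ℕ → ℕ} (h1 : ∀ a ∈ s, f a ≤ 1)
    (h2 : ∑ a ∈ s, f a = s.card) : ∀ a ∈ s, f a = 1 := by
  intro a ha
  by_contra h
  have hlt : ∑ a ∈ s, f a < ∑ _a ∈ s, 1 :=
    Finset.sum_lt_sum h1 ⟨a, ha, lt_of_le_of_ne (h1 a ha) h⟩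
  simp at hlt
  omega

lemma sum_aux (p c : ℕ) (g : ℕ → ℕ) (hc1 : 1 ≤ c) (hcp : c ≤ p) :
    ∑ t ∈ Icc 1 p, (if c + t ≤ p then 0 else if c + t = p + 1 then 1 - g t else 1)
      = (c - 1) + (1 - g (p + 1 - c)) := by
  have hsub : Icc (p - c + 1) p ⊆ Icc 1 p := by
    intro t ht; simp only [mem_Icc] at *; omega
  rw [← Finset.sum_subset hsub]
  · have hins : Icc (p - c + 1) p = insert (p - c + 1) (Icc (p - c + 2) p) := by
      ext t; simp only [mem_insert, mem_Icc]; omega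
    rw [hins, Finset.sum_insert (by simp only [mem_Icc]; omega)]
    have e1 : (if c + (p - c + 1) ≤ p then 0 else if c + (p - c + 1) = p + 1 then 1 - g (p - c + 1) else 1) = 1 - g (p + 1 - c) := by
      have h2 : c + (p - c + 1) = p + 1 := by omega
      have h3 : p - c + 1 = p + 1 - c := by omega
      rw [h2, h3, if_neg (by omega : ¬ p + 1 ≤ p), if_pos rfl]
    rw [e1]
    have e2 : ∑ t ∈ Icc (p - c + 2) p, (if c + t ≤ p then 0 else if c + t = p + 1 then 1 - g t else 1) = ∑ t ∈ Icc (p - c + 2) p, 1 := by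
      apply Finset.sum_congr rfl
      intro t ht; simp only [mem_Icc] at ht
      rw [if_neg (by omega), if_neg (by omega)]
    rw [e2]
    simp [Nat.card_Icc]
    omega
  · intro t ht hnt
    simp only [mem_Icc] at *
    rw [if_pos (by omega)]

lemma uniq : ∀ (p : ℕ) (α : ℕ → ℕ), (∀ i ∈ Icc 1 p, α i ≤ 1) →
    ∀ (T : ℕ → ℕ → ℕ),
    (∀ i ∈ Icc 1 p, ∀ j ∈ Icc 1 p, T i j ≤ 1) →
    (∀ i ∈ Icc 1 p, ∑ j ∈ Icc 1 p, T i j = i - α i) →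
    (∀ j ∈ Icc 1 p, ∑ i ∈ Icc 1 p, T i j = j - α (p + 1 - j)) →
    ∀ i ∈ Icc 1 p, ∀ j ∈ Icc 1 p,
      T i j = if i + j ≤ p then 0 else if i + j = p + 1 then 1 - α i else 1 := by
  intro p
  induction p with
  | zero => intro α _ T _ _ _ i hi; simp at hi
  | succ n ih =>
    intro α hα T hT1 hTr hTc
    have hmem1 : (1 : ℕ) ∈ Icc 1 (n+1) := by simp
    have hmemtop : (n+1 : ℕ) ∈ Icc 1 (n+1) := by simp
    have hα1 : α 1 ≤ 1 := hα 1 hmem1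
    -- split column sums at i = 1
    have hsplit1 : ∀ f : ℕ → ℕ, ∑ i ∈ Icc 1 (n+1), f i = f 1 + ∑ i ∈ Icc 2 (n+1), f i := by
      intro f
      have : Icc 1 (n+1) = insert 1 (Icc 2 (n+1)) := by
        ext t; simp only [mem_insert, mem_Icc]; omega
      rw [this, Finset.sum_insert (by simp)]
    -- column n+1 facts and row 1 facts
    have hcoltop : ∑ i ∈ Icc 1 (n+1), T i (n+1) = n + 1 - α 1 := by
      have := hTc (n+1) hmemtop
      simpa using this
    have hrow1 : ∑ j ∈ Icc 1 (n+1), T 1 j = 1 - α 1 := by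
      have := hTr 1 hmem1; simpa using this
    -- key claims
    have h1 : ∀ j ∈ Icc 1 (n+1), T 1 j = if j = n+1 then 1 - α 1 else 0 := by
      intro j hj
      rcases Nat.le_one_iff_eq_zero_or_eq_one.mp hα1 with h0 | h0
      · -- α 1 = 0 : column n+1 is all ones, row 1 has single one at n+1
        have hcol : ∀ i ∈ Icc 1 (n+1), T i (n+1) = 1 := by
          apply all_one (fun i hi => hT1 i hi (n+1) hmemtop)
          rw [hcoltop, h0, Nat.card_Icc]
          omega
        have hrest : ∑ j ∈ Icc 1 n, T 1 j = 0 := by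
          have hs := Finset.sum_Icc_succ_top (by omega : 1 ≤ n + 1) (T 1)
          rw [hs, hcol 1 hmem1, h0] at hrow1
          omega
        simp only [mem_Icc] at hj
        by_cases hje : j = n+1
        · rw [if_pos hje, hje, h0, Nat.sub_zero]; exact hcol 1 hmem1
        · rw [if_neg hje]
          exact (Finset.sum_eq_zero_iff.mp hrest) j (by simp only [mem_Icc]; omega)
      · -- α 1 = 1 : row 1 is all zeros
        have hrow0 : ∑ j ∈ Icc 1 (n+1), T 1 j = 0 := by rw [hrow1, h0]
        have hz := Finset.sum_eq_zero_iff.mp hrow0 j hj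
        rw [hz]
        by_cases hje : j = n+1
        · rw [if_pos hje, h0]
          omega
        · rw [if_neg hje]
    have h2 : ∀ i ∈ Icc 2 (n+1), T i (n+1) = 1 := by
      rcases Nat.le_one_iff_eq_zero_or_eq_one.mp hα1 with h0 | h0
      · have hcol : ∀ i ∈ Icc 1 (n+1), T i (n+1) = 1 := by
          apply all_one (fun i hi => hT1 i hi (n+1) hmemtop)
          rw [hcoltop, h0, Nat.card_Icc]
          omega
        intro i hi; simp only [mem_Icc] at hi
        exact hcol i (by simp only [mem_Icc]; omega)
      · -- T 1 (n+1) = 0, rest of column sums to n = card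
        have hT1top : T 1 (n+1) = 0 := by
          have := h1 (n+1) hmemtop; rw [if_pos rfl, h0] at this; simpa using this
        apply all_one (fun i hi => by
          simp only [mem_Icc] at hi
          exact hT1 i (by simp only [mem_Icc]; omega) (n+1) hmemtop)
        rw [Nat.card_Icc]
        have := hsplit1 (fun i => T i (n+1))
        rw [hcoltop, hT1top, h0] at this
        omega
    -- now the shifted matrix
    have hαs : ∀ i ∈ Icc 1 n, (fun i => α (i+1)) i ≤ 1 := by
      intro i hi; simp only [mem_Icc] at hi
      exact hα (i+1) (by simp only [mem_Icc]; omega)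
    have hshift : ∀ j, ∑ i ∈ Icc 1 n, T (i+1) j = ∑ i ∈ Icc 2 (n+1), T i j := by
      intro j
      apply Finset.sum_nbij' (fun i => i + 1) (fun i => i - 1) <;>
        intro a ha <;> simp only [mem_Icc] at * <;> first | omega | rfl | (congr 1; omega)
    have hTr' : ∀ i ∈ Icc 1 n, ∑ j ∈ Icc 1 n, T (i+1) j = i - α (i+1) := by
      intro i hi; simp only [mem_Icc] at hi
      have hmem : i + 1 ∈ Icc 1 (n+1) := by simp only [mem_Icc]; omega
      have hs := Finset.sum_Icc_succ_top (by omega : 1 ≤ n + 1) (T (i+1))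
      have hrow := hTr (i+1) hmem
      rw [hs, h2 (i+1) (by simp only [mem_Icc]; omega)] at hrow
      have hαi : α (i+1) ≤ 1 := hα (i+1) hmem
      omega
    have hTc' : ∀ j ∈ Icc 1 n, ∑ i ∈ Icc 1 n, T (i+1) j = j - α (n + 1 - j + 1) := by
      intro j hj; simp only [mem_Icc] at hj
      have hmem : j ∈ Icc 1 (n+1) := by simp only [mem_Icc]; omega
      have hcol := hTc j hmem
      have hz : T 1 j = 0 := by
        have := h1 j hmem; rw [if_neg (by omega)] at this; exact this
      rw [hsplit1 (fun i => T i j), hz] at hcol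
      simp only [Nat.zero_add] at hcol
      have heq : n + 1 + 1 - j = n + 1 - j + 1 := by omega
      rw [heq] at hcol
      rw [hshift j, hcol]
    have hT1' : ∀ i ∈ Icc 1 n, ∀ j ∈ Icc 1 n, T (i+1) j ≤ 1 := by
      intro i hi j hj; simp only [mem_Icc] at hi hj
      exact hT1 (i+1) (by simp only [mem_Icc]; omega) j (by simp only [mem_Icc]; omega)
    have IH := ih (fun i => α (i+1)) hαs (fun i j => T (i+1) j) hT1' hTr'
      (by intro j hj; exact hTc' j hj)
    -- conclude
    intro i hi j hj
    simp only [mem_Icc] at hi hj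
    by_cases hi1 : i = 1
    · subst hi1
      have := h1 j (by simp only [mem_Icc]; omega)
      rw [this]
      by_cases hje : j = n + 1
      · rw [if_pos hje, if_neg (by omega), if_pos (by omega)]
      · rw [if_neg hje, if_pos (by omega)]
    · by_cases hje : j = n + 1
      · subst hje
        rw [h2 i (by simp only [mem_Icc]; omega), if_neg (by omega), if_neg (by omega)]
      · have hIH := IH (i-1) (by simp only [mem_Icc]; omega) j (by simp only [mem_Icc]; omega)
        have hieq : i - 1 + 1 = i := by omega
        rw [hieq] at hIH
        rw [hIH]
        by_cases hc1 : i + j ≤ n + 1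
        · rw [if_pos (by omega), if_pos (by omega)]
        · by_cases hc2 : i + j = n + 2
          · rw [if_neg (by omega), if_pos (by omega), if_neg (by omega), if_pos (by omega)]
          · rw [if_neg (by omega), if_neg (by omega), if_neg (by omega), if_neg (by omega)]


theorem stmt_15 (p : ℕ) (α β : ℕ → ℕ)
    (hα : ∀ i ∈ Finset.Icc 1 p, α i ≤ 1)
    (hβ : ∀ i ∈ Finset.Icc 1 p, β i ≤ 1)
    (x y : ℕ → ℕ)
    (hx : ∀ i ∈ Finset.Icc 1 p, x i = i - α i)
    (hy : ∀ i ∈ Finset.Icc 1 p, y i = i - β i)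
    (PM : ℕ → ℕ → ℕ)
    (hPM : ∀ i j, PM i j = if i + j ≤ p then 0
      else if i + j = p + 1 then 1 - α i else 1)
    (hcons : ∃ T : ℕ → ℕ → ℕ,
      (∀ i ∈ Finset.Icc 1 p, ∀ j ∈ Finset.Icc 1 p, T i j ≤ 1) ∧
      (∀ i ∈ Finset.Icc 1 p, ∑ j ∈ Finset.Icc 1 p, T i j = x i) ∧
      (∀ j ∈ Finset.Icc 1 p, ∑ i ∈ Finset.Icc 1 p, T i j = y j)) :
    (∀ i ∈ Finset.Icc 1 p, α (p - i + 1) = β i) ↔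
    ((∀ i ∈ Finset.Icc 1 p, ∑ j ∈ Finset.Icc 1 p, PM i j = x i) ∧
     (∀ j ∈ Finset.Icc 1 p, ∑ i ∈ Finset.Icc 1 p, PM i j = y j) ∧
     (∀ T : ℕ → ℕ → ℕ,
       (∀ i ∈ Finset.Icc 1 p, ∀ j ∈ Finset.Icc 1 p, T i j ≤ 1) →
       (∀ i ∈ Finset.Icc 1 p, ∑ j ∈ Finset.Icc 1 p, T i j = x i) →
       (∀ j ∈ Finset.Icc 1 p, ∑ i ∈ Finset.Icc 1 p, T i j = y j) →
       ∀ i ∈ Finset.Icc 1 p, ∀ j ∈ Finset.Icc 1 p, T i j = PM i j)) := by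
  clear hcons
  have hrow : ∀ i ∈ Finset.Icc 1 p, ∑ j ∈ Finset.Icc 1 p, PM i j = x i := by
    intro i hi
    have hi' := hi; simp only [mem_Icc] at hi'
    have hs := sum_aux p i (fun _ => α i) hi'.1 hi'.2
    have he : ∑ j ∈ Icc 1 p, PM i j
        = ∑ t ∈ Icc 1 p, (if i + t ≤ p then 0 else if i + t = p + 1 then 1 - α i else 1) :=
      Finset.sum_congr rfl (fun t _ => hPM i t)
    rw [he, hs, hx i hi]
    have := hα i hi
    omega
  have hcolgen : ∀ j ∈ Finset.Icc 1 p, ∑ i ∈ Finset.Icc 1 p, PM i j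
      = (j - 1) + (1 - α (p + 1 - j)) := by
    intro j hj
    have hj' := hj; simp only [mem_Icc] at hj'
    have hs := sum_aux p j α hj'.1 hj'.2
    have he : ∑ i ∈ Icc 1 p, PM i j
        = ∑ t ∈ Icc 1 p, (if j + t ≤ p then 0 else if j + t = p + 1 then 1 - α t else 1) := by
      refine Finset.sum_congr rfl (fun t _ => ?_)
      rw [hPM t j, Nat.add_comm t j]
    rw [he, hs]
  constructor
  · intro hrev
    refine ⟨hrow, ?_, ?_⟩
    · intro j hj
      have hj' := hj; simp only [mem_Icc] at hj'
      have hmem : p + 1 - j ∈ Finset.Icc 1 p := by simp only [mem_Icc]; omega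
      have ha := hα (p + 1 - j) hmem
      have hb := hβ j hj
      have hr := hrev j hj
      have hidx : p - j + 1 = p + 1 - j := by omega
      rw [hidx] at hr
      rw [hcolgen j hj, hy j hj, ← hr]
      omega
    · intro T hT1 hTr hTc i hi j hj
      have key := uniq p α hα T hT1
        (fun i hi => (hTr i hi).trans (hx i hi))
        (fun j hj => by
          have hj' := hj; simp only [mem_Icc] at hj'
          have hr := hrev j hj
          have hidx : p - j + 1 = p + 1 - j := by omega
          rw [hidx] at hr
          rw [hTc j hj, hy j hj, hr])
        i hi j hj
      rw [hPM i j]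
      exact key
  · rintro ⟨-, hc, -⟩ i hi
    have hi' := hi; simp only [mem_Icc] at hi'
    have hmem : p + 1 - i ∈ Finset.Icc 1 p := by simp only [mem_Icc]; omega
    have ha := hα (p + 1 - i) hmem
    have hb := hβ i hi
    have hcc := hc i hi
    rw [hcolgen i hi, hy i hi] at hcc
    have hidx : p - i + 1 = p + 1 - i := by omega
    rw [hidx]
    omega
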